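/- For any ideal I ⊆ R = k[[x_1, ..., x_n]] and any p, q ∈ ℕ, one has I^{p-jc} · I^{q-jc} ⊆ I^{(p+q+1)-jc}. Consequently the function f_I : R/I → ℕ ∪ {∞}, defined by f_I(g) = m + 1 if g ∈ I^{m-jc}/I and g ∉ I^{(m+1)-jc}/I (with f_I(g) = 0 if g ∉ m, f_I(g) = ∞ if g ∈ I^{∞-jc}/I), satisfies f_I(xy) ≥ f_I(x) + f_I(y), f_I(x + y) ≥ min(f_I(x), f_I(y)), f_I(1) = 0 and f_I(0) = ∞; i.e. f_I is a filtration on R/I. -/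

import Mathlib

open Polynomial

/-- The truncated polynomial ring `A[t]/(t^(m+1))`. -/
abbrev JetTrunc (A : Type) [CommRing A] (m : ℕ) : Type :=
  Polynomial A ⧸ (Ideal.span {(X : Polynomial A) ^ (m + 1)} : Ideal (Polynomial A))

/-- The image of the variable `t` in `A[t]/(t^(m+1))`. -/
noncomputable def jetT (A : Type) [CommRing A] (m : ℕ) : JetTrunc A m :=
  Ideal.Quotient.mk _ (X : Polynomial A)

namespace JetAux

variable (k : Type) [CommRing k] (A : Type) [CommRing A] [Algebra k A]

/-- The quotient map `A[X] → A[X]/(X^(m+1))` as a `k`-algebra hom. -/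
noncomputable def jmk (m : ℕ) : Polynomial A →ₐ[k] JetTrunc A m := Ideal.Quotient.mkₐ k _

lemma jmk_surjective (m : ℕ) : Function.Surjective (jmk k A m) :=
  Ideal.Quotient.mk_surjective

lemma jmk_eq_zero_iff (m : ℕ) (P : Polynomial A) :
    jmk k A m P = 0 ↔ ∀ i ≤ m, P.coeff i = 0 := by
  rw [jmk, Ideal.Quotient.mkₐ_eq_mk, Ideal.Quotient.eq_zero_iff_mem,
    Ideal.mem_span_singleton, Polynomial.X_pow_dvd_iff]
  exact ⟨fun h i hi => h i (Nat.lt_succ_of_le hi), fun h i hi => h i (Nat.lt_succ_iff.mp hi)⟩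

lemma jetT_eq (m : ℕ) : jetT A m = jmk k A m X := rfl

lemma jetT_pow (m : ℕ) : (jetT A m) ^ (m + 1) = 0 := by
  rw [jetT, ← map_pow, Ideal.Quotient.eq_zero_iff_mem]
  exact Ideal.subset_span rfl

variable {p q m : ℕ}

/-- Truncation `A[X]/(X^(m+1)) → A[X]/(X^(p+1))` for `p ≤ m`. -/
noncomputable def truncHom (h : p ≤ m) : JetTrunc A m →ₐ[k] JetTrunc A p :=
  Ideal.Quotient.liftₐ _ (jmk k A p) (by
    intro a ha
    rw [Ideal.mem_span_singleton] at ha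
    rw [jmk, Ideal.Quotient.mkₐ_eq_mk, Ideal.Quotient.eq_zero_iff_mem,
      Ideal.mem_span_singleton]
    exact dvd_trans (pow_dvd_pow _ (by omega)) ha)

lemma truncHom_jmk (h : p ≤ m) (P : Polynomial A) :
    truncHom k A h (jmk k A m P) = jmk k A p P := by
  rw [truncHom, Ideal.Quotient.liftₐ_apply]
  rfl

lemma truncHom_jetT (h : p ≤ m) : truncHom k A h (jetT A m) = jetT A p := by
  rw [jetT_eq k, jetT_eq k, truncHom_jmk]

/-- If an element truncates to zero, it is divisible by `t^(p+1)`. -/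
lemma dvd_of_truncHom_eq_zero (h : p ≤ m) (x : JetTrunc A m) (hx : truncHom k A h x = 0) :
    (jetT A m) ^ (p + 1) ∣ x := by
  obtain ⟨P, rfl⟩ := jmk_surjective k A m x
  rw [truncHom_jmk, jmk_eq_zero_iff] at hx
  have : (X : Polynomial A) ^ (p + 1) ∣ P := by
    rw [Polynomial.X_pow_dvd_iff]
    exact fun i hi => hx i (Nat.lt_succ_iff.mp hi)
  obtain ⟨c, rfl⟩ := this
  exact ⟨jmk k A m c, by rw [jetT_eq k, ← map_pow, ← map_mul]⟩

/-- The constants map `A → A[s]/(s^(p+1))`. -/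
noncomputable def constA (p : ℕ) : A →ₐ[k] JetTrunc A p :=
  (jmk k A p).comp Polynomial.CAlgHom

/-- The "stretch" map `A[t]/(t^(p+1)) → (A[s]/(s^(p+1)))[t]/(t^(q+1))`, `t ↦ s·t`,
at the polynomial level: `A[X] → (A[s]/(s^(p+1)))[X]`, `X ↦ s·X`. -/
noncomputable def stretchPoly (p : ℕ) : Polynomial A →ₐ[k] Polynomial (JetTrunc A p) :=
  Polynomial.aevalTower (Polynomial.CAlgHom.comp (constA k A p))
    (Polynomial.C (jetT A p) * X)

set_option maxRecDepth 4000 in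
lemma stretchPoly_coeff (p : ℕ) (P : Polynomial A) (i : ℕ) :
    (stretchPoly k A p P).coeff i = constA k A p (P.coeff i) * (jetT A p) ^ i := by
  induction P using Polynomial.induction_on' with
  | add f g hf hg => simp [hf, hg, add_mul]
  | monomial n a =>
      rw [← Polynomial.C_mul_X_pow_eq_monomial]
      simp only [stretchPoly, map_mul, map_pow, Polynomial.aevalTower_C,
        Polynomial.aevalTower_X, AlgHom.coe_comp, Function.comp_apply,
        Polynomial.CAlgHom_apply]
      rw [((Polynomial.commute_X _).symm.mul_pow _), ← Polynomial.C_pow, ← mul_assoc, ← map_mul]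
      rw [Polynomial.coeff_C_mul, Polynomial.coeff_C_mul, Polynomial.coeff_X_pow, Polynomial.coeff_X_pow]
      by_cases h : i = n <;> simp [h]

lemma stretchPoly_X_pow_succ (p : ℕ) :
    stretchPoly k A p ((X : Polynomial A) ^ (p + 1)) = 0 := by
  rw [map_pow, stretchPoly, Polynomial.aevalTower_X]
  rw [((Polynomial.commute_X _).symm.mul_pow _), ← Polynomial.C_pow,
    jetT_pow, map_zero, zero_mul]

/-- The stretch map `t ↦ s·t : A[t]/(t^(p+1)) → (A[s]/(s^(p+1)))[t]/(t^(q+1))`. -/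
noncomputable def stretchHom (h : p ≤ q) :
    JetTrunc A p →ₐ[k] JetTrunc (JetTrunc A p) q :=
  Ideal.Quotient.liftₐ _ ((jmk k (JetTrunc A p) q).comp (stretchPoly k A p)) (by
    intro a ha
    rw [Ideal.mem_span_singleton] at ha
    obtain ⟨c, rfl⟩ := ha
    rw [AlgHom.comp_apply, map_mul, stretchPoly_X_pow_succ, zero_mul, map_zero])

lemma stretchHom_jmk (h : p ≤ q) (P : Polynomial A) :
    stretchHom k A h (jmk k A p P) = jmk k (JetTrunc A p) q (stretchPoly k A p P) := by
  rw [stretchHom, Ideal.Quotient.liftₐ_apply]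
  rfl

lemma constA_eq_zero_iff (p : ℕ) (a : A) : constA k A p a = 0 ↔ a = 0 := by
  rw [constA, AlgHom.comp_apply, Polynomial.CAlgHom_apply, jmk_eq_zero_iff]
  constructor
  · intro h
    simpa using h 0 (Nat.zero_le p)
  · intro h i _
    simp [h]

lemma stretchHom_injective (h : p ≤ q) : Function.Injective (stretchHom k A h) := by
  rw [injective_iff_map_eq_zero]
  intro x hx
  obtain ⟨P, rfl⟩ := jmk_surjective k A p x
  rw [stretchHom_jmk, jmk_eq_zero_iff] at hx
  rw [jmk_eq_zero_iff]
  intro i hi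
  have := hx i (le_trans hi h)
  rw [stretchPoly_coeff] at this
  have h2 : constA k A p (P.coeff i) * jetT A p ^ i =
      jmk k A p (Polynomial.C (P.coeff i) * X ^ i) := by
    rw [map_mul, map_pow]; rfl
  rw [h2, jmk_eq_zero_iff] at this
  simpa using this i hi

lemma stretchHom_jetT (h : p ≤ q) :
    jetT (JetTrunc A p) q ∣ stretchHom k A h (jetT A p) := by
  have e : stretchHom k A h (jetT A p)
      = jmk k (JetTrunc A p) q (Polynomial.C (jetT A p)) * jetT (JetTrunc A p) q := by
    rw [show jetT A p = jmk k A p X from rfl, stretchHom_jmk, stretchPoly,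
      Polynomial.aevalTower_X, map_mul]
    rfl
  rw [e]
  exact Dvd.intro_left _ rfl

end JetAux

/-- A test datum for the `m`-th jet closure of an ideal `I` of a local `k`-algebra `(R, 𝔪)`:
a `k`-algebra `A` together with a `k`-algebra map `φ : R → A[t]/(t^(m+1))` killing `I`
and sending the maximal ideal `𝔪` into `(t)` (i.e. an `A`-point of the scheme of local
`m`-jets of `Spec (R/I)` over the closed point). -/
structure JetTest (k : Type) [CommRing k] {R : Type} [CommRing R] [Algebra k R]
    (𝔪 : Ideal R) (m : ℕ) (I : Ideal R) where
  A : Type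
  [instCommRing : CommRing A]
  [instAlgebra : Algebra k A]
  φ : R →ₐ[k] JetTrunc A m
  ker_I : ∀ f ∈ I, φ f = 0
  max_to_t : ∀ f ∈ 𝔪, φ f ∈ Ideal.span {jetT A m}

attribute [instance] JetTest.instCommRing JetTest.instAlgebra

/-- The `m`-th jet closure `I^{m-jc}` of an ideal `I` in a local `k`-algebra `(R, 𝔪)`:
the intersection of the kernels of all jet test maps (functor-of-points description of the
kernel of `μ_m : R → R_m[t]/(t^(m+1), I_m, 𝔪^e)`). -/
noncomputable def jetClosure (k : Type) [CommRing k] {R : Type} [CommRing R] [Algebra k R]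
    (𝔪 : Ideal R) (m : ℕ) (I : Ideal R) : Ideal R :=
  sInf { J : Ideal R | ∃ T : JetTest k 𝔪 m I, J = RingHom.ker T.φ }

/-- The maximal ideal `(x_1, ..., x_n)` of the formal power series ring `k[[x_1, ..., x_n]]`. -/
noncomputable def mIdeal (k : Type) [Field k] (n : ℕ) : Ideal (MvPowerSeries (Fin n) k) :=
  RingHom.ker (MvPowerSeries.constantCoeff : MvPowerSeries (Fin n) k →+* k)


namespace JetAux

variable {k : Type} [CommRing k] {R : Type} [CommRing R] [Algebra k R]
  {𝔪 : Ideal R} {I : Ideal R} {p q m : ℕ}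

lemma mem_jetClosure_iff {f : R} :
    f ∈ jetClosure k 𝔪 m I ↔ ∀ T : JetTest k 𝔪 m I, T.φ f = 0 := by
  rw [jetClosure, Ideal.mem_sInf]
  constructor
  · intro h T
    have := h (show RingHom.ker T.φ ∈ _ from ⟨T, rfl⟩)
    exact RingHom.mem_ker.mp this
  · rintro h J ⟨T, rfl⟩
    exact RingHom.mem_ker.mpr (h T)

/-- Truncating a jet test. -/
noncomputable def truncTest (T : JetTest k 𝔪 m I) (h : p ≤ m) : JetTest k 𝔪 p I where
  A := T.A
  φ := (truncHom k T.A h).comp T.φ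
  ker_I := fun f hf => by rw [AlgHom.comp_apply, T.ker_I f hf, map_zero]
  max_to_t := fun f hf => by
    rw [AlgHom.comp_apply, Ideal.mem_span_singleton]
    have := T.max_to_t f hf
    rw [Ideal.mem_span_singleton] at this
    have h2 := map_dvd (truncHom k T.A h) this
    rwa [truncHom_jetT] at h2

/-- Stretching a jet test. -/
noncomputable def stretchTest (T : JetTest k 𝔪 p I) (h : p ≤ q) : JetTest k 𝔪 q I where
  A := JetTrunc T.A p
  φ := (stretchHom k T.A h).comp T.φ
  ker_I := fun f hf => by rw [AlgHom.comp_apply, T.ker_I f hf, map_zero]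
  max_to_t := fun f hf => by
    rw [AlgHom.comp_apply, Ideal.mem_span_singleton]
    have h1 := T.max_to_t f hf
    rw [Ideal.mem_span_singleton] at h1
    exact dvd_trans (stretchHom_jetT k T.A h) (map_dvd (stretchHom k T.A h) h1)

lemma jetClosure_antitone (h : p ≤ q) : jetClosure k 𝔪 q I ≤ jetClosure k 𝔪 p I := by
  intro f hf
  rw [mem_jetClosure_iff] at hf ⊢
  intro T
  have h0 := hf (stretchTest T h)
  have : stretchHom k T.A h (T.φ f) = 0 := h0
  exact stretchHom_injective k T.A h (by rw [this, map_zero])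

lemma jetClosure_mul_le :
    jetClosure k 𝔪 p I * jetClosure k 𝔪 q I ≤ jetClosure k 𝔪 (p + q + 1) I := by
  rw [Ideal.mul_le]
  intro r hr s hs
  rw [mem_jetClosure_iff] at hr hs ⊢
  intro T
  have hp : p ≤ p + q + 1 := by omega
  have hq : q ≤ p + q + 1 := by omega
  have h1 : truncHom k T.A hp (T.φ r) = 0 := hr (truncTest T hp)
  have h2 : truncHom k T.A hq (T.φ s) = 0 := hs (truncTest T hq)
  obtain ⟨u, hu⟩ := dvd_of_truncHom_eq_zero k T.A hp _ h1
  obtain ⟨v, hv⟩ := dvd_of_truncHom_eq_zero k T.A hq _ h2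
  rw [map_mul, hu, hv]
  have : (jetT T.A (p + q + 1)) ^ (p + 1) * u * ((jetT T.A (p + q + 1)) ^ (q + 1) * v)
      = (jetT T.A (p + q + 1)) ^ (p + q + 1 + 1) * (u * v) := by ring
  rw [this, jetT_pow, zero_mul]

end JetAux

/-- The function `f_I : R/I → ℕ ∪ {∞}` attached to the chain of jet closures of `I`:
`f_I g` is the supremum of `m + 1` over all `m` with `g ∈ I^{m-jc}/I` (so `f_I g = m + 1`
when `g ∈ I^{m-jc}/I` and `g ∉ I^{(m+1)-jc}/I`, `f_I g = 0` when `g ∉ 𝔪/I = I^{0-jc}/I`,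
and `f_I g = ∞` when `g ∈ I^{∞-jc}/I = ∩ I^{m-jc}/I`). -/
noncomputable def fI (k : Type) [Field k] {n : ℕ} (I : Ideal (MvPowerSeries (Fin n) k))
    (g : MvPowerSeries (Fin n) k ⧸ I) : ℕ∞ :=
  ⨆ (m : ℕ) (_ : g ∈ (jetClosure k (mIdeal k n) m I).map (Ideal.Quotient.mk I)),
    ((m : ℕ∞) + 1)


namespace JetAux

lemma cast_succ_enat (a b : ℕ) (h : a + 1 = b) : ((a : ℕ∞)) + 1 = (b : ℕ∞) := by
  subst h
  rw [Nat.cast_add, Nat.cast_one]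

lemma enat_eq_top (x : ℕ∞) (h : ∀ m : ℕ, (m : ℕ∞) + 1 ≤ x) : x = ⊤ := by
  rcases eq_or_ne x ⊤ with h' | h'
  · exact h'
  · obtain ⟨r, rfl⟩ := WithTop.ne_top_iff_exists.mp h'
    have hr := h r
    have hlt : (r : ℕ∞) < (r : ℕ∞) + 1 := by
      have : (r : ℕ∞) < ((r + 1 : ℕ) : ℕ∞) := by exact_mod_cast Nat.lt_succ_self r
      simpa using this
    exact absurd (lt_of_lt_of_le hlt hr) (lt_irrefl _)

variable {k : Type} [Field k] {n : ℕ} {I : Ideal (MvPowerSeries (Fin n) k)} {m : ℕ}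

/-- `constantCoeff` as a `k`-algebra hom. -/
noncomputable def ccAlgHom (k : Type) [Field k] (n : ℕ) :
    MvPowerSeries (Fin n) k →ₐ[k] k :=
  { (MvPowerSeries.constantCoeff : MvPowerSeries (Fin n) k →+* k) with
    commutes' := fun c => by
      simp [MvPowerSeries.algebraMap_apply] }

lemma ccAlgHom_apply (f : MvPowerSeries (Fin n) k) :
    ccAlgHom k n f = MvPowerSeries.constantCoeff f := rfl

/-- The constant jet test: `R → k → A[t]/(t^(m+1))`. -/
noncomputable def constTest (hI : I ≤ mIdeal k n) (m : ℕ) :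
    JetTest k (mIdeal k n) m I where
  A := k
  φ := (Algebra.ofId k (JetTrunc k m)).comp (ccAlgHom k n)
  ker_I := fun f hf => by
    have : ccAlgHom k n f = 0 := RingHom.mem_ker.mp (hI hf)
    rw [AlgHom.comp_apply, this, map_zero]
  max_to_t := fun f hf => by
    have : ccAlgHom k n f = 0 := RingHom.mem_ker.mp hf
    rw [AlgHom.comp_apply, this, map_zero]
    exact Ideal.zero_mem _

lemma jetClosure_le_mIdeal (hI : I ≤ mIdeal k n) (m : ℕ) :
    jetClosure k (mIdeal k n) m I ≤ mIdeal k n := by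
  intro f hf
  rw [mem_jetClosure_iff] at hf
  have h0 := hf (constTest hI m)
  have h1 : algebraMap k (JetTrunc k m) (ccAlgHom k n f) = 0 := h0
  rw [← Ideal.Quotient.mk_algebraMap, ← Polynomial.C_eq_algebraMap] at h1
  have h2 : jmk k k m (Polynomial.C (ccAlgHom k n f)) = 0 := h1
  rw [jmk_eq_zero_iff] at h2
  have := h2 0 (Nat.zero_le m)
  rw [Polynomial.coeff_C_zero] at this
  exact RingHom.mem_ker.mpr this

lemma le_fI_of_mem {g : MvPowerSeries (Fin n) k ⧸ I}
    (h : g ∈ (jetClosure k (mIdeal k n) m I).map (Ideal.Quotient.mk I)) :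
    (m : ℕ∞) + 1 ≤ fI k I g := by
  rw [fI]
  exact le_iSup_of_le m (by rw [iSup_pos h])

lemma mem_of_le_fI {g : MvPowerSeries (Fin n) k ⧸ I}
    (h : (m : ℕ∞) + 1 ≤ fI k I g) :
    g ∈ (jetClosure k (mIdeal k n) m I).map (Ideal.Quotient.mk I) := by
  by_contra hg
  have hle : fI k I g ≤ (m : ℕ∞) := by
    rw [fI]
    refine iSup_le fun j => iSup_le fun hj => ?_
    have hjm : j < m := by
      by_contra h'
      push_neg at h'
      exact hg (Ideal.map_mono (jetClosure_antitone h') hj)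
    exact_mod_cast Nat.succ_le_of_lt hjm
  have hcon : (m : ℕ∞) + 1 ≤ (m : ℕ∞) := le_trans h hle
  have hlt : (m : ℕ∞) < (m : ℕ∞) + 1 := by
    have : (m : ℕ∞) < ((m + 1 : ℕ) : ℕ∞) := by exact_mod_cast Nat.lt_succ_self m
    simpa using this
  exact absurd (lt_of_lt_of_le hlt hcon) (lt_irrefl _)

end JetAux

/-- `I^{p-jc} · I^{q-jc} ⊆ I^{(p+q+1)-jc}` for all `p, q`; consequently the
function `f_I : R/I → ℕ ∪ {∞}` satisfies `f_I (xy) ≥ f_I x + f_I y`,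
`f_I (x + y) ≥ min (f_I x) (f_I y)`, `f_I 1 = 0` and `f_I 0 = ∞`; i.e. `f_I` is a
filtration on `R/I`. -/
theorem jetClosure_filtration (k : Type) [Field k] [IsAlgClosed k] [CharZero k] (n : ℕ)
    (I : Ideal (MvPowerSeries (Fin n) k)) (hI : I ≤ mIdeal k n) :
    (∀ p q : ℕ,
        jetClosure k (mIdeal k n) p I * jetClosure k (mIdeal k n) q I ≤
          jetClosure k (mIdeal k n) (p + q + 1) I) ∧
      (∀ x y : MvPowerSeries (Fin n) k ⧸ I, fI k I x + fI k I y ≤ fI k I (x * y)) ∧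
      (∀ x y : MvPowerSeries (Fin n) k ⧸ I, min (fI k I x) (fI k I y) ≤ fI k I (x + y)) ∧
      fI k I 1 = 0 ∧ fI k I 0 = ⊤ := by
  have mksurj : Function.Surjective (Ideal.Quotient.mk I) := Ideal.Quotient.mk_surjective
  -- elements of the quotient lying in `I^{m-jc}/I`
  have hmulL : ∀ (x y : MvPowerSeries (Fin n) k ⧸ I), fI k I y ≤ fI k I (x * y) := by
    intro x y
    rw [fI, fI]
    exact iSup_le fun j => iSup_le fun hj =>
      le_iSup_of_le j (by rw [iSup_pos (Ideal.mul_mem_left _ x hj)])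
  have hmulR : ∀ (x y : MvPowerSeries (Fin n) k ⧸ I), fI k I x ≤ fI k I (x * y) := by
    intro x y
    rw [fI, fI]
    exact iSup_le fun j => iSup_le fun hj =>
      le_iSup_of_le j (by rw [iSup_pos (Ideal.mul_mem_right y _ hj)])
  refine ⟨fun p q => JetAux.jetClosure_mul_le, ?_, ?_, ?_, ?_⟩
  · -- multiplicativity
    intro x y
    by_cases hx0 : fI k I x = 0
    · rw [hx0, zero_add]; exact hmulL x y
    by_cases hy0 : fI k I y = 0
    · rw [hy0, add_zero]; exact hmulR x y
    by_cases hxT : fI k I x = ⊤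
    · have hmem : ∀ m : ℕ, x ∈ (jetClosure k (mIdeal k n) m I).map (Ideal.Quotient.mk I) :=
        fun m => JetAux.mem_of_le_fI (by rw [hxT]; exact le_top)
      have : fI k I (x * y) = ⊤ := JetAux.enat_eq_top _ fun m =>
        JetAux.le_fI_of_mem (Ideal.mul_mem_right y _ (hmem m))
      rw [this]
      exact le_top
    by_cases hyT : fI k I y = ⊤
    · have hmem : ∀ m : ℕ, y ∈ (jetClosure k (mIdeal k n) m I).map (Ideal.Quotient.mk I) :=
        fun m => JetAux.mem_of_le_fI (by rw [hyT]; exact le_top)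
      have : fI k I (x * y) = ⊤ := JetAux.enat_eq_top _ fun m =>
        JetAux.le_fI_of_mem (Ideal.mul_mem_left _ x (hmem m))
      rw [this]
      exact le_top
    · obtain ⟨r, hr⟩ := WithTop.ne_top_iff_exists.mp hxT
      obtain ⟨s, hs⟩ := WithTop.ne_top_iff_exists.mp hyT
      have hr' : (r : ℕ∞) = fI k I x := by exact_mod_cast hr
      have hs' : (s : ℕ∞) = fI k I y := by exact_mod_cast hs
      have hr0 : r ≠ 0 := by rintro rfl; exact hx0 (by exact_mod_cast hr'.symm)
      have hs0 : s ≠ 0 := by rintro rfl; exact hy0 (by exact_mod_cast hs'.symm)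
      have hcastx : ((r - 1 : ℕ) : ℕ∞) + 1 = (r : ℕ∞) :=
        JetAux.cast_succ_enat _ _ (by omega)
      have hcasty : ((s - 1 : ℕ) : ℕ∞) + 1 = (s : ℕ∞) :=
        JetAux.cast_succ_enat _ _ (by omega)
      have hx : x ∈ (jetClosure k (mIdeal k n) (r - 1) I).map (Ideal.Quotient.mk I) :=
        JetAux.mem_of_le_fI (by rw [hcastx, hr'])
      have hy : y ∈ (jetClosure k (mIdeal k n) (s - 1) I).map (Ideal.Quotient.mk I) :=
        JetAux.mem_of_le_fI (by rw [hcasty, hs'])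
      obtain ⟨a, ha, hax⟩ := (Ideal.mem_map_iff_of_surjective _ mksurj).mp hx
      obtain ⟨b, hb, hby⟩ := (Ideal.mem_map_iff_of_surjective _ mksurj).mp hy
      have hab : a * b ∈ jetClosure k (mIdeal k n) ((r - 1) + (s - 1) + 1) I :=
        JetAux.jetClosure_mul_le (Ideal.mul_mem_mul ha hb)
      have hxy : x * y ∈
          (jetClosure k (mIdeal k n) ((r - 1) + (s - 1) + 1) I).map (Ideal.Quotient.mk I) := by
        rw [← hax, ← hby, ← map_mul]
        exact Ideal.mem_map_of_mem _ hab
      have hle := JetAux.le_fI_of_mem hxy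
      have hcast : (((r - 1) + (s - 1) + 1 : ℕ) : ℕ∞) + 1 = (r : ℕ∞) + (s : ℕ∞) := by
        rw [JetAux.cast_succ_enat ((r - 1) + (s - 1) + 1) (r + s) (by omega), Nat.cast_add]
      rw [hcast] at hle
      rw [← hr', ← hs']
      exact hle
  · -- superadditivity w.r.t. min
    intro x y
    rcases le_total (fI k I x) (fI k I y) with h | h
    · rw [min_eq_left h, fI]
      refine iSup_le fun j => iSup_le fun hj => ?_
      have hy : y ∈ (jetClosure k (mIdeal k n) j I).map (Ideal.Quotient.mk I) :=
        JetAux.mem_of_le_fI (le_trans (JetAux.le_fI_of_mem hj) h)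
      exact JetAux.le_fI_of_mem (Ideal.add_mem _ hj hy)
    · rw [min_eq_right h, fI]
      refine iSup_le fun j => iSup_le fun hj => ?_
      have hx : x ∈ (jetClosure k (mIdeal k n) j I).map (Ideal.Quotient.mk I) :=
        JetAux.mem_of_le_fI (le_trans (JetAux.le_fI_of_mem hj) h)
      exact JetAux.le_fI_of_mem (Ideal.add_mem _ hx hj)
  · -- fI 1 = 0
    have hone : ∀ m : ℕ, (1 : MvPowerSeries (Fin n) k ⧸ I) ∉
        (jetClosure k (mIdeal k n) m I).map (Ideal.Quotient.mk I) := by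
      intro m h1
      obtain ⟨a, ha, hmk⟩ := (Ideal.mem_map_iff_of_surjective _ mksurj).mp h1
      have hsub : a - 1 ∈ I := by
        rw [← Ideal.Quotient.eq_zero_iff_mem, map_sub, hmk, map_one, sub_self]
      have ham : a ∈ mIdeal k n := JetAux.jetClosure_le_mIdeal hI m ha
      have h1m : (1 : MvPowerSeries (Fin n) k) ∈ mIdeal k n := by
        have := Ideal.sub_mem _ ham (hI hsub)
        simpa using this
      have : (MvPowerSeries.constantCoeff : MvPowerSeries (Fin n) k →+* k) 1 = 0 := RingHom.mem_ker.mp h1m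
      rw [map_one] at this
      exact one_ne_zero this
    refine le_antisymm ?_ zero_le
    rw [fI]
    exact iSup_le fun m => iSup_le fun h => absurd h (hone m)
  · -- fI 0 = ⊤
    exact JetAux.enat_eq_top _ fun m => JetAux.le_fI_of_mem (Ideal.zero_mem _)
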